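/- For all integers m, n ≥ 1: v_m·V_n + d·u_m·U_n = 2·V_{m+n}, where d = p² + 4q and scalar multiplication of quaternions by the real numbers v_m, u_m is used. -/

import Mathlib

open Quaternion

theorem stmt14 (p q d : ℝ) (hd : d = p ^ 2 + 4 * q) (u : ℕ → ℝ) (hu : ∀ n, u (n + 2) = p * u (n + 1) + q * u n)
    (hu0 : u 0 = 0) (hu1 : u 1 = 1)
    (U : ℕ → ℍ[ℝ]) (hU : ∀ n, U n = ⟨u n, u (n + 1), u (n + 2), u (n + 3)⟩)
    (v : ℕ → ℝ) (hv : ∀ n, v (n + 2) = p * v (n + 1) + q * v n)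
    (hv0 : v 0 = 2) (hv1 : v 1 = p)
    (V : ℕ → ℍ[ℝ]) (hV : ∀ n, V n = ⟨v n, v (n + 1), v (n + 2), v (n + 3)⟩)
    (m n : ℕ) (hm : 1 ≤ m) (hn : 1 ≤ n) :
    v m • V n + (d * u m) • U n = (2 : ℝ) • V (m + n) := by
  have key1 : ∀ k, d * u k + p * v k = 2 * v (k + 1) := by
    intro k
    induction k using Nat.twoStepInduction with
    | zero => simp [hu0, hv0, hv1]; ring
    | one => rw [hu1, hv1, show (1:ℕ)+1 = 0+2 from rfl, hv 0, hv0, hv1, hd]; ring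
    | more k ih1 ih2 =>
      rw [hu k, hv k, hv (k+1)]
      linear_combination p * ih2 + q * ih1
  have key : ∀ m k, v m * v k + d * (u m * u k) = 2 * v (m + k) := by
    intro m
    induction m using Nat.twoStepInduction with
    | zero => intro k; simp [hu0, hv0]
    | one =>
      intro k
      rw [hu1, hv1, show (1:ℕ) + k = k + 1 from Nat.add_comm 1 k]
      linear_combination key1 k
    | more m ih1 ih2 =>
      intro k
      rw [hu m, hv m, show m + 2 + k = m + k + 2 by ring, hv (m + k)]
      have h2' : v (m + 1 + k) = v (m + k + 1) := by ring_nf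
      linear_combination p * ih2 k + q * ih1 k + 2 * p * h2'
  rw [hU n, hV n, hV (m + n)]
  have e1 : m + n + 1 = m + (n + 1) := by ring
  have e2 : m + n + 2 = m + (n + 2) := by ring
  have e3 : m + n + 3 = m + (n + 3) := by ring
  ext <;> simp <;> erw [QuaternionAlgebra.smul_mk, QuaternionAlgebra.smul_mk, QuaternionAlgebra.smul_mk] <;> simp
  · linear_combination key m n
  · rw [e1]; linear_combination key m (n + 1)
  · rw [e2]; linear_combination key m (n + 2)
  · rw [e3]; linear_combination key m (n + 3)
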